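/- For c > 0 define β(c) = (8π/27)·A(c)⁴/B(c)³ with A(c) = Σ_{k≥1} e^{−ck}/k³, B(c) = Σ_{k≥1} e^{−ck}/k⁴. Then β'(c) = β(c)·(3A(c)² − 4C(c)B(c))/(A(c)B(c)), where C(c) = Σ_{k≥1} e^{−ck}/k², and β'(c) < 0. -/

import Mathlib

open Real

private lemma summable_aux (p : ℕ) {x : ℝ} (hx : 0 < x) :
    Summable (fun k : ℕ => Real.exp (-x * ((k : ℝ) + 1)) / ((k : ℝ) + 1) ^ p) := by
  have hgeo : Summable (fun k : ℕ => Real.exp (-x) ^ (k + 1)) := by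
    apply Summable.comp_injective (i := fun k : ℕ => k + 1)
    · exact summable_geometric_of_lt_one (le_of_lt (exp_pos _)) (by
        rw [exp_lt_one_iff]; linarith)
    · exact fun a b h => by simpa using h
  apply Summable.of_nonneg_of_le (fun k => by positivity) _ hgeo
  intro k
  have hk0 : (0 : ℝ) ≤ (k : ℝ) := Nat.cast_nonneg k
  have hk1 : (1 : ℝ) ≤ (k : ℝ) + 1 := by linarith
  have h1 : Real.exp (-x * ((k : ℝ) + 1)) = Real.exp (-x) ^ (k + 1) := by
    rw [← Real.exp_nat_mul]
    push_cast
    ring_nf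
  rw [← h1]
  calc Real.exp (-x * ((k : ℝ) + 1)) / ((k : ℝ) + 1) ^ p
      ≤ Real.exp (-x * ((k : ℝ) + 1)) / 1 :=
        div_le_div_of_nonneg_left (le_of_lt (exp_pos _)) one_pos (one_le_pow₀ hk1)
    _ = Real.exp (-x * ((k : ℝ) + 1)) := by rw [div_one]

private lemma tsum_pos_aux (p : ℕ) {x : ℝ} (hx : 0 < x) :
    0 < ∑' k : ℕ, Real.exp (-x * ((k : ℝ) + 1)) / ((k : ℝ) + 1) ^ p := by
  apply Summable.tsum_pos (summable_aux p hx) (fun k => by positivity) 0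
  positivity

private lemma hasDerivAt_aux (p : ℕ) {c : ℝ} (hc : 0 < c) :
    HasDerivAt (fun x : ℝ => ∑' k : ℕ, Real.exp (-x * ((k : ℝ) + 1)) / ((k : ℝ) + 1) ^ (p + 1))
      (-∑' k : ℕ, Real.exp (-c * ((k : ℝ) + 1)) / ((k : ℝ) + 1) ^ p) c := by
  have key : HasDerivAt
      (fun x : ℝ => ∑' k : ℕ, Real.exp (-x * ((k : ℝ) + 1)) / ((k : ℝ) + 1) ^ (p + 1))
      (∑' k : ℕ, -(Real.exp (-c * ((k : ℝ) + 1)) / ((k : ℝ) + 1) ^ p)) c := by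
    apply hasDerivAt_tsum_of_isPreconnected
      (u := fun k : ℕ => Real.exp (-(c / 2) * ((k : ℝ) + 1)))
      (g' := fun (k : ℕ) (y : ℝ) => -(Real.exp (-y * ((k : ℝ) + 1)) / ((k : ℝ) + 1) ^ p))
      (y₀ := c) (t := Set.Ioi (c / 2))
    · have := summable_aux 0 (x := c / 2) (by linarith)
      simpa using this
    · exact isOpen_Ioi
    · exact isPreconnected_Ioi
    · intro k y _
      have hk : (0 : ℝ) < (k : ℝ) + 1 := by positivity
      have h2 : HasDerivAt (fun x : ℝ => -x * ((k : ℝ) + 1)) (-1 * ((k : ℝ) + 1)) y :=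
        ((hasDerivAt_id y).neg.mul_const ((k : ℝ) + 1))
      have h1 := h2.exp
      have h3 := h1.div_const (((k : ℝ) + 1) ^ (p + 1))
      refine h3.congr_deriv ?_
      have hkne : ((k : ℝ) + 1) ≠ 0 := ne_of_gt hk
      rw [pow_succ]
      field_simp
    · intro k y hy
      have hk0 : (0 : ℝ) ≤ (k : ℝ) := Nat.cast_nonneg k
      have hk : (1 : ℝ) ≤ (k : ℝ) + 1 := by linarith
      have hkp : (1 : ℝ) ≤ ((k : ℝ) + 1) ^ p := one_le_pow₀ hk
      rw [Real.norm_eq_abs, abs_neg, abs_div, abs_of_pos (exp_pos _),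
        abs_of_pos (by linarith : (0:ℝ) < ((k : ℝ) + 1) ^ p)]
      calc Real.exp (-y * ((k : ℝ) + 1)) / ((k : ℝ) + 1) ^ p
          ≤ Real.exp (-y * ((k : ℝ) + 1)) / 1 :=
            div_le_div_of_nonneg_left (le_of_lt (exp_pos _)) one_pos hkp
        _ = Real.exp (-y * ((k : ℝ) + 1)) := div_one _
        _ ≤ Real.exp (-(c / 2) * ((k : ℝ) + 1)) := by
            apply Real.exp_le_exp.2
            have hy' : c / 2 ≤ y := le_of_lt hy
            nlinarith
    · exact Set.mem_Ioi.2 (by linarith)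
    · exact summable_aux (p + 1) hc
    · exact Set.mem_Ioi.2 (by linarith)
  rwa [tsum_neg] at key

theorem stmt19 (c : ℝ) (hc : 0 < c) :
    let A : ℝ → ℝ := fun c => ∑' k : ℕ, Real.exp (-c * ((k : ℝ) + 1)) / ((k : ℝ) + 1) ^ 3
    let B : ℝ → ℝ := fun c => ∑' k : ℕ, Real.exp (-c * ((k : ℝ) + 1)) / ((k : ℝ) + 1) ^ 4
    let Cs : ℝ → ℝ := fun c => ∑' k : ℕ, Real.exp (-c * ((k : ℝ) + 1)) / ((k : ℝ) + 1) ^ 2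
    let β : ℝ → ℝ := fun c => (8 * π / 27) * A c ^ 4 / B c ^ 3
    HasDerivAt β (β c * (3 * A c ^ 2 - 4 * Cs c * B c) / (A c * B c)) c ∧
    β c * (3 * A c ^ 2 - 4 * Cs c * B c) / (A c * B c) < 0 := by
  intro A B Cs β
  have hApos : 0 < A c := tsum_pos_aux 3 hc
  have hBpos : 0 < B c := tsum_pos_aux 4 hc
  have hCpos : 0 < Cs c := tsum_pos_aux 2 hc
  have hA : HasDerivAt A (-Cs c) c := hasDerivAt_aux 2 hc
  have hB : HasDerivAt B (-A c) c := hasDerivAt_aux 3 hc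
  have hderiv : HasDerivAt β (β c * (3 * A c ^ 2 - 4 * Cs c * B c) / (A c * B c)) c := by
    have h1 : HasDerivAt (fun x => A x ^ 4) (4 * A c ^ 3 * (-Cs c)) c := by
      simpa using hA.fun_pow 4
    have h2 : HasDerivAt (fun x => B x ^ 3) (3 * B c ^ 2 * (-A c)) c := by
      simpa using hB.fun_pow 3
    have hBne : B c ^ 3 ≠ 0 := by positivity
    have h3 := (h1.const_mul (8 * π / 27)).div h2 hBne
    have hval : β c * (3 * A c ^ 2 - 4 * Cs c * B c) / (A c * B c) =
        (8 * π / 27 * (4 * A c ^ 3 * (-Cs c)) * B c ^ 3 -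
          8 * π / 27 * A c ^ 4 * (3 * B c ^ 2 * (-A c))) / (B c ^ 3) ^ 2 := by
      have hβ : β c = (8 * π / 27) * A c ^ 4 / B c ^ 3 := rfl
      rw [hβ]
      field_simp
      ring
    rw [hval]
    exact h3
  refine ⟨hderiv, ?_⟩
  -- Cauchy-Schwarz: A c ^ 2 ≤ Cs c * B c
  have hCS : A c ^ 2 ≤ Cs c * B c := by
    have hsumA := summable_aux 3 hc
    have hsumB := summable_aux 4 hc
    have hsumC := summable_aux 2 hc
    have key : ∀ s : Finset ℕ,
        (∑ k ∈ s, Real.exp (-c * ((k : ℝ) + 1)) / ((k : ℝ) + 1) ^ 3) ^ 2 ≤ Cs c * B c := by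
      intro s
      have hfin := Finset.sum_sq_le_sum_mul_sum_of_sq_eq_mul s
        (f := fun k : ℕ => Real.exp (-c * ((k : ℝ) + 1)) / ((k : ℝ) + 1) ^ 2)
        (g := fun k : ℕ => Real.exp (-c * ((k : ℝ) + 1)) / ((k : ℝ) + 1) ^ 4)
        (r := fun k : ℕ => Real.exp (-c * ((k : ℝ) + 1)) / ((k : ℝ) + 1) ^ 3)
        (fun k _ => by positivity) (fun k _ => by positivity)
        (fun k _ => by
          have hkne : ((k : ℝ) + 1) ≠ 0 := by positivity
          field_simp)
      refine hfin.trans (mul_le_mul ?_ ?_ (Finset.sum_nonneg fun k _ => by positivity)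
        (le_of_lt hCpos))
      · exact Summable.sum_le_tsum s (fun k _ => by positivity) hsumC
      · exact Summable.sum_le_tsum s (fun k _ => by positivity) hsumB
    have hAlim : Filter.Tendsto
        (fun s : Finset ℕ => (∑ k ∈ s, Real.exp (-c * ((k : ℝ) + 1)) / ((k : ℝ) + 1) ^ 3) ^ 2)
        Filter.atTop (nhds (A c ^ 2)) := hsumA.hasSum.pow 2
    exact le_of_tendsto hAlim (Filter.Eventually.of_forall key)
  have hnum : 3 * A c ^ 2 - 4 * Cs c * B c < 0 := by nlinarith
  have hβpos : 0 < β c := by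
    have hπ : (0:ℝ) < π := Real.pi_pos
    show 0 < (8 * π / 27) * A c ^ 4 / B c ^ 3
    positivity
  have hmul : β c * (3 * A c ^ 2 - 4 * Cs c * B c) < 0 := mul_neg_of_pos_of_neg hβpos hnum
  exact div_neg_of_neg_of_pos hmul (by positivity)
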